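/- Let p : E → B and p' : E' → B' be continuous maps with B and B' nonempty, and let f : B → C and f' : B' → C' be continuous maps such that the images f(B) ⊆ C and f'(B') ⊆ C' are normal spaces in their subspace topologies. Then for the product map p × p' : E × E' → B × B' and f × f' : B × B' → C × C' one has max{secat_f[p], secat_{f'}[p']} ≤ secat_{f×f'}[p × p' : E × E' → B × B'] ≤ secat_f[p] + secat_{f'}[p']. -/
import Mathlib

open Set Topology Filter Function

section AuxSec

variable {E B C : Type*} [TopologicalSpace E] [TopologicalSpace B] [TopologicalSpace C]

/-- Existence of a continuous section of `p` over a set `O`. -/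
def HasSec (p : C(E, B)) (O : Set B) : Prop :=
  ∃ s : C(O, E), ∀ x, p (s x) = (x : B)

lemma HasSec.mono {p : C(E, B)} {O O' : Set B} (h : HasSec p O) (hsub : O' ⊆ O) :
    HasSec p O' := by
  obtain ⟨s, hs⟩ := h
  exact ⟨s.comp ⟨Set.inclusion hsub, continuous_inclusion hsub⟩, fun x => hs _⟩

lemma HasSec.iUnion {ι : Type*} {p : C(E, B)} {A : ι → Set B} (ho : ∀ i, IsOpen (A i))
    (hd : Pairwise (Function.onFun Disjoint A)) (hs : ∀ i, HasSec p (A i)) :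
    HasSec p (⋃ i, A i) := by
  choose s hsec using hs
  set T : Set B := ⋃ i, A i with hT
  set S : ι → Set ↥T := fun i => Subtype.val ⁻¹' A i with hSdef
  have hmap : ∀ i, Continuous (fun x : ↥(S i) => (⟨x.1.1, x.2⟩ : ↥(A i))) := fun i =>
    Continuous.subtype_mk (continuous_subtype_val.comp continuous_subtype_val) _
  set φ : ∀ i, C(↥(S i), E) := fun i => (s i).comp ⟨_, hmap i⟩ with hφdef
  have hφ : ∀ (i j) (x : ↥T) (hxi : x ∈ S i) (hxj : x ∈ S j),
      φ i ⟨x, hxi⟩ = φ j ⟨x, hxj⟩ := by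
    intro i j x hxi hxj
    rcases eq_or_ne i j with rfl | hne
    · rfl
    · exact absurd hxj (Set.disjoint_left.mp (hd hne) hxi)
  have hS : ∀ x : ↥T, ∃ i, S i ∈ 𝓝 x := by
    intro x
    obtain ⟨i, hi⟩ := mem_iUnion.mp x.2
    exact ⟨i, (((ho i).preimage continuous_subtype_val).mem_nhds hi)⟩
  refine ⟨ContinuousMap.liftCover S φ hφ hS, ?_⟩
  intro x
  obtain ⟨i, hi⟩ := mem_iUnion.mp x.2
  have : ContinuousMap.liftCover S φ hφ hS ((⟨x, hi⟩ : ↥(S i)) : ↥T) = φ i ⟨x, hi⟩ :=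
    ContinuousMap.liftCover_coe (⟨x, hi⟩ : ↥(S i))
  rw [this]
  exact hsec i ⟨x.1, hi⟩

lemma HasSec.prodSec {E' B' : Type*} [TopologicalSpace E'] [TopologicalSpace B']
    {p : C(E, B)} {p' : C(E', B')} {O : Set B} {O' : Set B'}
    (h : HasSec p O) (h' : HasSec p' O') : HasSec (p.prodMap p') (O ×ˢ O') := by
  obtain ⟨s, hs⟩ := h; obtain ⟨t, ht⟩ := h'
  refine ⟨⟨fun x => (s ⟨x.1.1, x.2.1⟩, t ⟨x.1.2, x.2.2⟩), ?_⟩, ?_⟩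
  · exact (s.continuous.comp (Continuous.subtype_mk
      (continuous_fst.comp continuous_subtype_val) _)).prodMk
      (t.continuous.comp (Continuous.subtype_mk
      (continuous_snd.comp continuous_subtype_val) _))
  · intro x
    exact Prod.ext (hs _) (ht _)

/-- Existence of an `(m+1)`-fold open "sectional cover" witnessing `secatf p f ≤ m`. -/
def SCov (p : C(E, B)) (f : C(B, C)) (m : ℕ) : Prop :=
  ∃ U : Fin (m + 1) → Set C, (∀ i, IsOpen (U i)) ∧ Set.range f ⊆ (⋃ i, U i) ∧
    ∀ i, HasSec p (⇑f ⁻¹' U i)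

end AuxSec

/-- The relative sectional category `secat_f[p : E → B]` of `p : E → B` with respect to
`f : B → C`: the least `n` such that there are open sets `U_0, …, U_n ⊆ C` with
`f(B) ⊆ U_0 ∪ ⋯ ∪ U_n` and `p` admitting a continuous section over each `f⁻¹(U_i)`. -/
noncomputable def secatf {E B C : Type*} [TopologicalSpace E] [TopologicalSpace B]
    [TopologicalSpace C] (p : C(E, B)) (f : C(B, C)) : ℕ∞ :=
  sInf {n : ℕ∞ | ∃ m : ℕ, n = m ∧ ∃ U : Fin (m + 1) → Set C,
    (∀ i, IsOpen (U i)) ∧ Set.range f ⊆ (⋃ i, U i) ∧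
    ∀ i, ∃ s : C((⇑f ⁻¹' U i : Set B), E), ∀ x, p (s x) = (x : B)}

section SecatfLemmas

variable {E B C : Type*} [TopologicalSpace E] [TopologicalSpace B] [TopologicalSpace C]

lemma secatf_le {p : C(E, B)} {f : C(B, C)} {m : ℕ} (h : SCov p f m) :
    secatf p f ≤ (m : ℕ∞) := by
  obtain ⟨U, h1, h2, h3⟩ := h
  exact sInf_le ⟨m, rfl, U, h1, h2, h3⟩

lemma secatf_le_secatf {E₂ B₂ C₂ : Type*} [TopologicalSpace E₂] [TopologicalSpace B₂]
    [TopologicalSpace C₂] {p : C(E, B)} {f : C(B, C)} {p₂ : C(E₂, B₂)} {f₂ : C(B₂, C₂)}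
    (h : ∀ m : ℕ, SCov p₂ f₂ m → SCov p f m) : secatf p f ≤ secatf p₂ f₂ := by
  apply le_sInf
  rintro n ⟨m, rfl, U, h1, h2, h3⟩
  exact secatf_le (h m ⟨U, h1, h2, h3⟩)

lemma secatf_exists {p : C(E, B)} {f : C(B, C)} (h : secatf p f ≠ ⊤) :
    ∃ m : ℕ, secatf p f = m ∧ SCov p f m := by
  have hlt : secatf p f < secatf p f + 1 := (ENat.lt_add_one_iff h).mpr le_rfl
  obtain ⟨n, hn, hlt'⟩ := sInf_lt_iff.mp hlt
  have h1 : n ≤ secatf p f := (ENat.lt_add_one_iff h).mp hlt'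
  have h2 : secatf p f ≤ n := sInf_le hn
  obtain ⟨m, rfl, U, hU1, hU2, hU3⟩ := hn
  exact ⟨m, le_antisymm h2 h1, U, hU1, hU2, hU3⟩

end SecatfLemmas

section Lower

variable {E E' B B' C C' : Type*} [TopologicalSpace E] [TopologicalSpace E']
    [TopologicalSpace B] [TopologicalSpace B'] [TopologicalSpace C] [TopologicalSpace C']
    {p : C(E, B)} {p' : C(E', B')} {f : C(B, C)} {f' : C(B', C')}

lemma SCov.left (b₀' : B') {m : ℕ} (h : SCov (p.prodMap p') (f.prodMap f') m) :
    SCov p f m := by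
  obtain ⟨W, ho, hc, hs⟩ := h
  refine ⟨fun i => (fun c => (c, f' b₀')) ⁻¹' W i,
    fun i => (ho i).preimage (continuous_id.prodMk continuous_const), ?_, ?_⟩
  · rintro c ⟨x, rfl⟩
    have hx : (f x, f' b₀') ∈ ⋃ i, W i := hc ⟨(x, b₀'), rfl⟩
    obtain ⟨i, hi⟩ := mem_iUnion.mp hx
    exact mem_iUnion.mpr ⟨i, hi⟩
  · intro i
    obtain ⟨s, hsec⟩ := hs i
    have hcont : Continuous fun x : ↥(⇑f ⁻¹' ((fun c => (c, f' b₀')) ⁻¹' W i)) =>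
        (⟨(x.1, b₀'), x.2⟩ : ↥(⇑(f.prodMap f') ⁻¹' W i)) :=
      Continuous.subtype_mk (continuous_subtype_val.prodMk continuous_const) _
    refine ⟨⟨fun x => (s ⟨(x.1, b₀'), x.2⟩).1,
      continuous_fst.comp (s.continuous.comp hcont)⟩, ?_⟩
    intro x
    exact congrArg Prod.fst (hsec ⟨(x.1, b₀'), x.2⟩)

lemma SCov.right (b₀ : B) {m : ℕ} (h : SCov (p.prodMap p') (f.prodMap f') m) :
    SCov p' f' m := by
  obtain ⟨W, ho, hc, hs⟩ := h
  refine ⟨fun i => (fun c => (f b₀, c)) ⁻¹' W i,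
    fun i => (ho i).preimage (continuous_const.prodMk continuous_id), ?_, ?_⟩
  · rintro c ⟨x, rfl⟩
    have hx : (f b₀, f' x) ∈ ⋃ i, W i := hc ⟨(b₀, x), rfl⟩
    obtain ⟨i, hi⟩ := mem_iUnion.mp hx
    exact mem_iUnion.mpr ⟨i, hi⟩
  · intro i
    obtain ⟨s, hsec⟩ := hs i
    have hcont : Continuous fun x : ↥(⇑f' ⁻¹' ((fun c => (f b₀, c)) ⁻¹' W i)) =>
        (⟨(b₀, x.1), x.2⟩ : ↥(⇑(f.prodMap f') ⁻¹' W i)) :=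
      Continuous.subtype_mk (continuous_const.prodMk continuous_subtype_val) _
    refine ⟨⟨fun x => (s ⟨(b₀, x.1), x.2⟩).2,
      continuous_snd.comp (s.continuous.comp hcont)⟩, ?_⟩
    intro x
    exact congrArg Prod.snd (hsec ⟨(b₀, x.1), x.2⟩)

end Lower

section Bump

/-- A rectangle-inclusion lemma for finsets. -/
lemma finset_rect {α β : Type*} {S S' : Finset α} {T T' : Finset β} (hS : S.Nonempty)
    (hT : T.Nonempty) (hcard : S.card + T.card = S'.card + T'.card)
    (hne : ¬(S = S' ∧ T = T')) : ∃ i ∈ S, ∃ j ∈ T, ¬(i ∈ S' ∧ j ∈ T') := by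
  by_contra hcon
  push_neg at hcon
  obtain ⟨i, hi⟩ := hS; obtain ⟨j, hj⟩ := hT
  have hSS' : S ⊆ S' := fun x hx => (hcon x hx j hj).1
  have hTT' : T ⊆ T' := fun y hy => (hcon i hi y hy).2
  have h1 := Finset.card_le_card hSS'
  have h2 := Finset.card_le_card hTT'
  have e1 : S'.card ≤ S.card := by omega
  have e2 : T'.card ≤ T.card := by omega
  exact hne ⟨Finset.eq_of_subset_of_card_le hSS' e1, Finset.eq_of_subset_of_card_le hTT' e2⟩

variable {B C : Type*} [TopologicalSpace B] [TopologicalSpace C]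

lemma exists_bump (f : C(B, C)) [NormalSpace (Set.range f : Set C)] {k : ℕ}
    (U : Fin (k + 1) → Set C) (hUo : ∀ i, IsOpen (U i))
    (hUc : Set.range f ⊆ ⋃ i, U i) :
    ∃ ρ : Fin (k + 1) → ↥(Set.range f) → ℝ,
      (∀ i, Continuous (ρ i)) ∧ (∀ i x, 0 ≤ ρ i x) ∧ (∀ i x, ρ i x ≤ 1) ∧
      (∀ i x, 0 < ρ i x → (x : C) ∈ U i) ∧ (∀ x, ∃ i, ρ i x = 1) := by
  have hcov : (univ : Set (Set.range f : Set C)) ⊆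
      ⋃ i, (Subtype.val ⁻¹' U i : Set (Set.range f : Set C)) := by
    rintro ⟨c, hc⟩ -
    have := hUc hc
    obtain ⟨i, hi⟩ := mem_iUnion.mp this
    exact mem_iUnion.mpr ⟨i, hi⟩
  obtain ⟨ρ, hsub⟩ := BumpCovering.exists_isSubordinate_of_locallyFinite isClosed_univ
    (fun i => (Subtype.val ⁻¹' U i : Set (Set.range f : Set C)))
    (fun i => (hUo i).preimage continuous_subtype_val) (locallyFinite_of_finite _) hcov
  refine ⟨fun i => ρ i, fun i => (ρ i).continuous, fun i x => ρ.nonneg i x,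
    fun i x => ρ.le_one i x, ?_, ?_⟩
  · intro i x hx
    have hmem : x ∈ tsupport (ρ i) := subset_tsupport _ (by
      simp only [Function.mem_support]; exact ne_of_gt hx)
    exact hsub i hmem
  · intro x
    obtain ⟨i, hev⟩ := ρ.eventuallyEq_one' x (mem_univ x)
    exact ⟨i, hev.eq_of_nhds⟩

end Bump

section Upper

variable {E E' B B' C C' : Type*} [TopologicalSpace E] [TopologicalSpace E']
    [TopologicalSpace B] [TopologicalSpace B'] [TopologicalSpace C] [TopologicalSpace C']

lemma SCov.prodCov {p : C(E, B)} {p' : C(E', B')} {f : C(B, C)} {f' : C(B', C')}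
    [NormalSpace (Set.range f : Set C)] [NormalSpace (Set.range f' : Set C')]
    {a b : ℕ} (h : SCov p f a) (h' : SCov p' f' b) :
    SCov (p.prodMap p') (f.prodMap f') (a + b) := by
  classical
  obtain ⟨U, hUo, hUc, hUs⟩ := h
  obtain ⟨V, hVo, hVc, hVs⟩ := h'
  obtain ⟨ρ, hρc, hρ0, hρ1, hρU, hρone⟩ := exists_bump f U hUo hUc
  obtain ⟨τ, hτc, hτ0, hτ1, hτV, hτone⟩ := exists_bump f' V hVo hVc
  -- the key open sets in `X × X'`
  set Q : Finset (Fin (a + 1)) → Finset (Fin (b + 1)) →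
      Set (↥(Set.range f) × ↥(Set.range f')) := fun S T =>
    {z | ∀ i ∈ S, ∀ j ∈ T, ∀ i' : Fin (a + 1), ∀ j' : Fin (b + 1),
      (if i' ∈ S ∧ j' ∈ T then 0 else ρ i' z.1 * τ j' z.2) < ρ i z.1 * τ j z.2} with hQdef
  have hQo : ∀ S T, IsOpen (Q S T) := by
    intro S T
    have hrw : Q S T = ⋂ i ∈ S, ⋂ j ∈ T, ⋂ i', ⋂ j',
        {z : ↥(Set.range f) × ↥(Set.range f') | (if i' ∈ S ∧ j' ∈ T then 0 else ρ i' z.1 * τ j' z.2)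
          < ρ i z.1 * τ j z.2} := by
      ext z
      simp only [hQdef, mem_setOf_eq, mem_iInter]
    rw [hrw]
    refine isOpen_biInter_finset fun i _ => isOpen_biInter_finset fun j _ =>
      isOpen_iInter_of_finite fun i' => isOpen_iInter_of_finite fun j' => ?_
    apply isOpen_lt
    · by_cases hc : i' ∈ S ∧ j' ∈ T
      · simp only [if_pos hc]; exact continuous_const
      · simp only [if_neg hc]
        exact ((hρc i').comp continuous_fst).mul ((hτc j').comp continuous_snd)
    · exact ((hρc i).comp continuous_fst).mul ((hτc j).comp continuous_snd)
  -- covering property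
  have hQmem : ∀ z : ↥(Set.range f) × ↥(Set.range f'), ∃ S T, S.Nonempty ∧ T.Nonempty ∧ z ∈ Q S T := by
    intro z
    obtain ⟨i₀, hi₀⟩ := hρone z.1
    obtain ⟨j₀, hj₀⟩ := hτone z.2
    refine ⟨Finset.univ.filter (fun i => ρ i z.1 = 1),
      Finset.univ.filter (fun j => τ j z.2 = 1),
      ⟨i₀, by simp [hi₀]⟩, ⟨j₀, by simp [hj₀]⟩, ?_⟩
    intro i hi j hj i' j'
    simp only [Finset.mem_filter, Finset.mem_univ, true_and] at hi hj
    rw [hi, hj, one_mul]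
    by_cases hc : i' ∈ Finset.univ.filter (fun i => ρ i z.1 = 1) ∧
        j' ∈ Finset.univ.filter (fun j => τ j z.2 = 1)
    · rw [if_pos hc]; exact one_pos
    · rw [if_neg hc]
      rw [not_and_or] at hc
      rcases hc with hc | hc
      · simp only [Finset.mem_filter, Finset.mem_univ, true_and] at hc
        have h1 : ρ i' z.1 < 1 := lt_of_le_of_ne (hρ1 i' z.1) hc
        calc ρ i' z.1 * τ j' z.2 ≤ ρ i' z.1 :=
              mul_le_of_le_one_right (hρ0 i' z.1) (hτ1 j' z.2)
          _ < 1 := h1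
      · simp only [Finset.mem_filter, Finset.mem_univ, true_and] at hc
        have h1 : τ j' z.2 < 1 := lt_of_le_of_ne (hτ1 j' z.2) hc
        calc ρ i' z.1 * τ j' z.2 ≤ τ j' z.2 :=
              mul_le_of_le_one_left (hτ0 j' z.2) (hρ1 i' z.1)
          _ < 1 := h1
  -- subordination
  have hQsub : ∀ S T i j, i ∈ S → j ∈ T → ∀ z ∈ Q S T,
      (z.1 : C) ∈ U i ∧ (z.2 : C') ∈ V j := by
    intro S T i j hi hj z hz
    have hpos := hz i hi j hj i j
    rw [if_pos ⟨hi, hj⟩] at hpos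
    rcases mul_pos_iff.mp hpos with ⟨h1, h2⟩ | ⟨h1, h2⟩
    · exact ⟨hρU i z.1 h1, hτV j z.2 h2⟩
    · exact absurd h1 (not_lt.mpr (hρ0 i z.1))
  -- disjointness on a fixed diagonal
  have hQdisj : ∀ S T S' T', S.Nonempty → T.Nonempty → S'.Nonempty → T'.Nonempty →
      S.card + T.card = S'.card + T'.card → ¬(S = S' ∧ T = T') →
      Disjoint (Q S T) (Q S' T') := by
    intro S T S' T' hS hT hS' hT' hcard hne
    rw [Set.disjoint_left]
    intro z hz hz'
    obtain ⟨i, hi, j, hj, hout⟩ := finset_rect hS hT hcard hne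
    obtain ⟨i₀, hi₀, j₀, hj₀, hout'⟩ := finset_rect hS' hT' hcard.symm
      (fun hc => hne ⟨hc.1.symm, hc.2.symm⟩)
    have l1 := hz i hi j hj i₀ j₀
    rw [if_neg hout'] at l1
    have l2 := hz' i₀ hi₀ j₀ hj₀ i j
    rw [if_neg hout] at l2
    exact absurd l2 (not_lt.mpr l1.le)
  -- ambient open sets
  set e : ↥(Set.range f) × ↥(Set.range f') → C × C' := fun z => ((z.1 : C), (z.2 : C')) with hedef
  have hind : IsInducing e := IsInducing.subtypeVal.prodMap IsInducing.subtypeVal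
  have hA : ∀ S T, ∃ A : Set (C × C'), IsOpen A ∧ e ⁻¹' A = Q S T := fun S T =>
    hind.isOpen_iff.mp (hQo S T)
  choose A hAo hAe using hA
  -- the map from B × B' to X × X'
  set g : B → ↥(Set.range f) := fun x => ⟨f x, mem_range_self x⟩ with hgdef
  set g' : B' → ↥(Set.range f') := fun x => ⟨f' x, mem_range_self x⟩ with hg'def
  set G : B × B' → ↥(Set.range f) × ↥(Set.range f') := fun z => (g z.1, g' z.2) with hGdef
  have hGc : Continuous G :=
    (Continuous.subtype_mk (f.continuous.comp continuous_fst) _).prodMk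
      (Continuous.subtype_mk (f'.continuous.comp continuous_snd) _)
  have hcomp : ⇑(f.prodMap f') = e ∘ G := rfl
  -- the cover
  refine ⟨fun r => ⋃ S, ⋃ T,
      ⋃ (_ : S.Nonempty ∧ T.Nonempty ∧ S.card + T.card = (r : ℕ) + 2), A S T,
    fun r => isOpen_iUnion fun S => isOpen_iUnion fun T => isOpen_iUnion fun _ => hAo S T,
    ?_, ?_⟩
  · rintro c ⟨z, rfl⟩
    obtain ⟨S, T, hS, hT, hmem⟩ := hQmem (G z)
    have hSc : S.card ≤ a + 1 := by
      simpa using Finset.card_le_univ S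
    have hTc : T.card ≤ b + 1 := by
      simpa using Finset.card_le_univ T
    have hS1 := hS.card_pos
    have hT1 := hT.card_pos
    refine mem_iUnion.mpr ⟨⟨S.card + T.card - 2, by omega⟩, mem_iUnion.mpr ⟨S,
      mem_iUnion.mpr ⟨T, mem_iUnion.mpr ⟨⟨hS, hT, by simp; omega⟩, ?_⟩⟩⟩⟩
    have : G z ∈ e ⁻¹' A S T := by rw [hAe]; exact hmem
    exact this
  · intro r
    have hrw : ⇑(f.prodMap f') ⁻¹' (⋃ S, ⋃ T,
        ⋃ (_ : S.Nonempty ∧ T.Nonempty ∧ S.card + T.card = (r : ℕ) + 2), A S T) =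
        ⋃ q : {q : Finset (Fin (a + 1)) × Finset (Fin (b + 1)) //
          q.1.Nonempty ∧ q.2.Nonempty ∧ q.1.card + q.2.card = (r : ℕ) + 2},
          G ⁻¹' Q q.1.1 q.1.2 := by
      ext z
      simp only [mem_preimage, mem_iUnion]
      constructor
      · rintro ⟨S, T, hc, hm⟩
        refine ⟨⟨(S, T), hc⟩, ?_⟩
        have : G z ∈ e ⁻¹' A S T := hm
        rwa [hAe] at this
      · rintro ⟨⟨⟨S, T⟩, hc⟩, hm⟩
        refine ⟨S, T, hc, ?_⟩
        show e (G z) ∈ A S T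
        rw [← mem_preimage, hAe]
        exact hm
    rw [hrw]
    apply HasSec.iUnion
    · intro q
      exact (hQo q.1.1 q.1.2).preimage hGc
    · intro q q' hne
      have hq := q.2
      have hq' := q'.2
      refine Disjoint.preimage G (hQdisj q.1.1 q.1.2 q'.1.1 q'.1.2 hq.1 hq.2.1 hq'.1
        hq'.2.1 (by omega) ?_)
      rintro ⟨e1, e2⟩
      exact hne (Subtype.ext (Prod.ext e1 e2))
    · rintro ⟨⟨S, T⟩, hS, hT, hcard⟩
      obtain ⟨i, hi⟩ := hS
      obtain ⟨j, hj⟩ := hT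
      refine ((hUs i).prodSec (hVs j)).mono ?_
      intro z hz
      exact (hQsub S T i j hi hj (G z) hz : (g z.1 : C) ∈ U i ∧ (g' z.2 : C') ∈ V j)

end Upper

/-- Product Inequality, I: For `p : E → B`, `p' : E' → B'`, `f : B → C`,
`f' : B' → C'` with `B`, `B'` nonempty and the images `f(B)`, `f'(B')` normal in their
subspace topologies,
`max{secat_f[p], secat_{f'}[p']} ≤ secat_{f×f'}[p × p'] ≤ secat_f[p] + secat_{f'}[p']`. -/
theorem secatf_prod {E E' B B' C C' : Type*} [TopologicalSpace E] [TopologicalSpace E']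
    [TopologicalSpace B] [TopologicalSpace B'] [TopologicalSpace C] [TopologicalSpace C']
    [Nonempty B] [Nonempty B']
    (p : C(E, B)) (p' : C(E', B')) (f : C(B, C)) (f' : C(B', C'))
    [NormalSpace (Set.range f : Set C)] [NormalSpace (Set.range f' : Set C')] :
    max (secatf p f) (secatf p' f') ≤ secatf (p.prodMap p') (f.prodMap f') ∧
    secatf (p.prodMap p') (f.prodMap f') ≤ secatf p f + secatf p' f' := by
  constructor
  · exact max_le
      (secatf_le_secatf fun m h => SCov.left (Classical.arbitrary B') h)
      (secatf_le_secatf fun m h => SCov.right (Classical.arbitrary B) h)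
  · by_cases h1 : secatf p f = ⊤
    · rw [h1, top_add]; exact le_top
    by_cases h2 : secatf p' f' = ⊤
    · rw [h2, add_top]; exact le_top
    obtain ⟨a, ha, hcov⟩ := secatf_exists h1
    obtain ⟨b, hb, hcov'⟩ := secatf_exists h2
    calc secatf (p.prodMap p') (f.prodMap f') ≤ ((a + b : ℕ) : ℕ∞) :=
          secatf_le (hcov.prodCov hcov')
      _ = (a : ℕ∞) + (b : ℕ∞) := by push_cast; rfl
      _ = secatf p f + secatf p' f' := by rw [ha, hb]
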